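/- Let (X_n)_{n≥0} be a real-valued stochastic approximation algorithm, let g : ℝ → ℝ be non-increasing with a zero x* such that g(x) > 0 for x < x* and g(x) < 0 for x > x*, and suppose the limit K_{gl} := −lim_{x→+∞} g(x) exists, is finite and positive. If K_{gl} > K_u, then for every ε > 0 there exists a constant a > 0, independent of n, such that for all sufficiently large n, ℙ(X_{n+1} − x* > ε) ≤ e^{−a n}. -/

import Mathlib

open MeasureTheory Filter Set

open MeasureTheory Filter Set Real

section saUT

variable {Ω : Type*} {m0 : MeasurableSpace Ω} {ℙ : Measure Ω} [IsProbabilityMeasure ℙ]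

lemma saUT_exp_le_chord {v c lam : ℝ} (hc : 0 < c) (hv : |v| ≤ c) :
    exp (lam * v) ≤ cosh (lam * c) + (sinh (lam * c) / c) * v := by
  obtain ⟨h1, h2⟩ := abs_le.mp hv
  have ha : (0:ℝ) ≤ (c - v) / (2 * c) := div_nonneg (by linarith) (by linarith)
  have hb : (0:ℝ) ≤ (c + v) / (2 * c) := div_nonneg (by linarith) (by linarith)
  have hab : (c - v) / (2 * c) + (c + v) / (2 * c) = 1 := by field_simp; ring
  have hconv := convexOn_exp.2 (Set.mem_univ (lam * -c)) (Set.mem_univ (lam * c)) ha hb hab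
  simp only [smul_eq_mul] at hconv
  have harg : (c - v) / (2 * c) * (lam * -c) + (c + v) / (2 * c) * (lam * c) = lam * v := by
    field_simp; ring
  rw [harg] at hconv
  refine hconv.trans (le_of_eq ?_)
  rw [Real.cosh_eq, Real.sinh_eq]
  have h3 : lam * -c = -(lam * c) := by ring
  rw [h3]
  field_simp
  ring

lemma saUT_integrable_of_ae_bound {f : Ω → ℝ} (hf : AEStronglyMeasurable f ℙ) {C : ℝ}
    (h : ∀ᵐ ω ∂ℙ, |f ω| ≤ C) : Integrable f ℙ :=
  (integrable_const C).mono' hf (by filter_upwards [h] with ω hω; rwa [Real.norm_eq_abs])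

lemma saUT_condexp_exp_le {m : MeasurableSpace Ω} (hm : m ≤ m0) {V : Ω → ℝ}
    (hVsm : AEStronglyMeasurable[m0] V ℙ) {c : ℝ} (lam : ℝ) (hc : 0 < c)
    (hbV : ∀ᵐ ω ∂ℙ, |V ω| ≤ c) (h0 : ℙ[V|m] =ᵐ[ℙ] 0) :
    ℙ[fun ω => exp (lam * V ω)|m] ≤ᵐ[ℙ] fun _ => exp (lam ^ 2 * c ^ 2 / 2) := by
  have hVint : Integrable V ℙ := saUT_integrable_of_ae_bound hVsm hbV
  have hexp_sm : AEStronglyMeasurable[m0] (fun ω => exp (lam * V ω)) ℙ :=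
    (Real.continuous_exp.comp (continuous_const.mul continuous_id)).comp_aestronglyMeasurable hVsm
  have hexp_bd : ∀ᵐ ω ∂ℙ, |exp (lam * V ω)| ≤ exp (|lam| * c) := by
    filter_upwards [hbV] with ω hω
    rw [abs_of_pos (Real.exp_pos _)]
    apply Real.exp_le_exp.mpr
    calc lam * V ω ≤ |lam * V ω| := le_abs_self _
      _ = |lam| * |V ω| := abs_mul _ _
      _ ≤ |lam| * c := by apply mul_le_mul_of_nonneg_left hω (abs_nonneg _)
  have hexp_int : Integrable (fun ω => exp (lam * V ω)) ℙ :=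
    saUT_integrable_of_ae_bound hexp_sm hexp_bd
  have hchord : ∀ᵐ ω ∂ℙ, exp (lam * V ω) ≤ cosh (lam * c) + (sinh (lam * c) / c) * V ω := by
    filter_upwards [hbV] with ω hω; exact saUT_exp_le_chord hc hω
  have hrhs_int : Integrable (fun ω => cosh (lam * c) + (sinh (lam * c) / c) * V ω) ℙ :=
    (integrable_const _).add (hVint.const_mul _)
  have h1 : ℙ[fun ω => exp (lam * V ω)|m] ≤ᵐ[ℙ]
      ℙ[fun ω => cosh (lam * c) + (sinh (lam * c) / c) * V ω|m] :=
    condExp_mono hexp_int hrhs_int hchord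
  have h2 : ℙ[fun ω => cosh (lam * c) + (sinh (lam * c) / c) * V ω|m] =ᵐ[ℙ]
      fun _ => cosh (lam * c) := by
    have ha : (fun ω => cosh (lam * c) + (sinh (lam * c) / c) * V ω)
        = (fun _ => cosh (lam * c)) + (sinh (lam * c) / c) • V := by
      funext ω; simp [smul_eq_mul]
    rw [ha]
    calc ℙ[(fun _ => cosh (lam * c)) + (sinh (lam * c) / c) • V|m]
        =ᵐ[ℙ] ℙ[(fun _ => cosh (lam * c))|m] + ℙ[(sinh (lam * c) / c) • V|m] :=
          condExp_add (integrable_const _) (hVint.smul _) m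
      _ =ᵐ[ℙ] (fun _ => cosh (lam * c)) + (sinh (lam * c) / c) • ℙ[V|m] := by
          rw [condExp_const hm]
          exact EventuallyEq.add (EventuallyEq.refl _ _) (condExp_smul _ _ m)
      _ =ᵐ[ℙ] fun _ => cosh (lam * c) := by
          filter_upwards [h0] with ω hω
          simp [hω]
  refine h1.trans (h2.le.trans (Eventually.of_forall fun ω => ?_))
  calc cosh (lam * c) ≤ exp ((lam * c) ^ 2 / 2) := Real.cosh_le_exp_half_sq _
    _ = exp (lam ^ 2 * c ^ 2 / 2) := by rw [mul_pow]

lemma saUT_azuma_mgf (ℱ : Filtration ℕ m0)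
    (V : ℕ → Ω → ℝ) (c : ℕ → ℝ) (a : ℕ)
    (hmeas : ∀ k, StronglyMeasurable[ℱ (k + 1)] (V k))
    (hc : ∀ k, a ≤ k → 0 < c k)
    (hbV : ∀ k, a ≤ k → ∀ᵐ ω ∂ℙ, |V k ω| ≤ c k)
    (h0 : ∀ k, ℙ[V k|ℱ k] =ᵐ[ℙ] 0) (lam : ℝ) :
    ∀ b, a ≤ b → ∫ ω, exp (lam * ∑ k ∈ Finset.Ico a b, V k ω) ∂ℙ ≤
      exp (lam ^ 2 * (∑ k ∈ Finset.Ico a b, (c k) ^ 2) / 2) := by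
  have hVm0 : ∀ k, AEStronglyMeasurable (V k) ℙ :=
    fun k => ((hmeas k).mono (ℱ.le (k + 1))).aestronglyMeasurable
  have hSsm : ∀ b, StronglyMeasurable[ℱ b] (fun ω => ∑ k ∈ Finset.Ico a b, V k ω) := by
    intro b
    apply Finset.stronglyMeasurable_fun_sum
    intro k hk
    exact (hmeas k).mono (ℱ.mono (Finset.mem_Ico.mp hk).2)
  have hfsm : ∀ b, StronglyMeasurable[ℱ b] (fun ω => exp (lam * ∑ k ∈ Finset.Ico a b, V k ω)) :=
    fun b => (Real.continuous_exp.comp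
      (continuous_const.mul continuous_id)).comp_stronglyMeasurable (hSsm b)
  have hfbd : ∀ b, ∀ᵐ ω ∂ℙ, |exp (lam * ∑ k ∈ Finset.Ico a b, V k ω)| ≤
      exp (|lam| * ∑ k ∈ Finset.Ico a b, |c k|) := by
    intro b
    have := ae_all_iff.mpr (fun k : ℕ => ae_all_iff.mpr (fun hk : a ≤ k => hbV k hk))
    filter_upwards [this] with ω hω
    rw [abs_of_pos (Real.exp_pos _)]
    apply Real.exp_le_exp.mpr
    calc lam * ∑ k ∈ Finset.Ico a b, V k ω ≤ |lam * ∑ k ∈ Finset.Ico a b, V k ω| := le_abs_self _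
      _ = |lam| * |∑ k ∈ Finset.Ico a b, V k ω| := abs_mul _ _
      _ ≤ |lam| * ∑ k ∈ Finset.Ico a b, |c k| := by
          apply mul_le_mul_of_nonneg_left _ (abs_nonneg _)
          refine (Finset.abs_sum_le_sum_abs _ _).trans (Finset.sum_le_sum ?_)
          intro k hk
          exact ((hω k) (Finset.mem_Ico.mp hk).1).trans (le_abs_self _)
  have hfint : ∀ b, Integrable (fun ω => exp (lam * ∑ k ∈ Finset.Ico a b, V k ω)) ℙ :=
    fun b => saUT_integrable_of_ae_bound ((hfsm b).mono (ℱ.le b)).aestronglyMeasurable (hfbd b)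
  intro b hb
  induction b, hb using Nat.le_induction with
  | base => simp
  | succ b hab IH =>
    have hVbint : Integrable (fun ω => exp (lam * V b ω)) ℙ := by
      apply saUT_integrable_of_ae_bound
      · exact (Real.continuous_exp.comp
          (continuous_const.mul continuous_id)).comp_aestronglyMeasurable (hVm0 b)
      · filter_upwards [hbV b hab] with ω hω
        rw [abs_of_pos (Real.exp_pos _)]
        apply Real.exp_le_exp.mpr
        calc lam * V b ω ≤ |lam * V b ω| := le_abs_self _
          _ = |lam| * |V b ω| := abs_mul _ _
          _ ≤ |lam| * c b := mul_le_mul_of_nonneg_left hω (abs_nonneg _)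
    have hsplit : ∀ ω, exp (lam * ∑ k ∈ Finset.Ico a (b + 1), V k ω)
        = exp (lam * ∑ k ∈ Finset.Ico a b, V k ω) * exp (lam * V b ω) := by
      intro ω
      rw [Finset.sum_Ico_succ_top hab, mul_add, Real.exp_add]
    have hprod_int : Integrable
        (fun ω => exp (lam * ∑ k ∈ Finset.Ico a b, V k ω) * exp (lam * V b ω)) ℙ := by
      have := hfint (b + 1)
      exact this.congr (Eventually.of_forall fun ω => hsplit ω)
    calc ∫ ω, exp (lam * ∑ k ∈ Finset.Ico a (b + 1), V k ω) ∂ℙ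
        = ∫ ω, exp (lam * ∑ k ∈ Finset.Ico a b, V k ω) * exp (lam * V b ω) ∂ℙ :=
          integral_congr_ae (Eventually.of_forall hsplit)
      _ = ∫ ω, (ℙ[fun ω' => exp (lam * ∑ k ∈ Finset.Ico a b, V k ω') * exp (lam * V b ω')|ℱ b]) ω ∂ℙ :=
          (integral_condExp (ℱ.le b)).symm
      _ = ∫ ω, exp (lam * ∑ k ∈ Finset.Ico a b, V k ω) * (ℙ[fun ω' => exp (lam * V b ω')|ℱ b]) ω ∂ℙ := by
          apply integral_congr_ae
          exact condExp_mul_of_stronglyMeasurable_left (hfsm b) hprod_int hVbint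
      _ ≤ ∫ ω, exp (lam * ∑ k ∈ Finset.Ico a b, V k ω) * exp (lam ^ 2 * (c b) ^ 2 / 2) ∂ℙ := by
          apply integral_mono_of_nonneg
          · have hnn : 0 ≤ᵐ[ℙ] ℙ[fun ω' => exp (lam * V b ω')|ℱ b] :=
              condExp_nonneg (Eventually.of_forall fun ω => (Real.exp_pos _).le)
            filter_upwards [hnn] with ω hω
            exact mul_nonneg (Real.exp_pos _).le hω
          · exact (hfint b).mul_const _
          · have hcond := saUT_condexp_exp_le (ℱ.le b) (hVm0 b) lam (hc b hab) (hbV b hab) (h0 b)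
            filter_upwards [hcond] with ω hω
            exact mul_le_mul_of_nonneg_left hω (Real.exp_pos _).le
      _ = (∫ ω, exp (lam * ∑ k ∈ Finset.Ico a b, V k ω) ∂ℙ) * exp (lam ^ 2 * (c b) ^ 2 / 2) :=
          integral_mul_const _ _
      _ ≤ exp (lam ^ 2 * (∑ k ∈ Finset.Ico a b, (c k) ^ 2) / 2) * exp (lam ^ 2 * (c b) ^ 2 / 2) :=
          mul_le_mul_of_nonneg_right IH (Real.exp_pos _).le
      _ = exp (lam ^ 2 * (∑ k ∈ Finset.Ico a (b + 1), (c k) ^ 2) / 2) := by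
          rw [← Real.exp_add, Finset.sum_Ico_succ_top hab]
          congr 1; ring

lemma saUT_azuma_tail (ℱ : Filtration ℕ m0) (V : ℕ → Ω → ℝ) (c : ℕ → ℝ) (a b : ℕ) (hab : a < b)
    (hmeas : ∀ k, StronglyMeasurable[ℱ (k + 1)] (V k))
    (hc : ∀ k, a ≤ k → 0 < c k)
    (hbV : ∀ k, a ≤ k → ∀ᵐ ω ∂ℙ, |V k ω| ≤ c k)
    (h0 : ∀ k, ℙ[V k|ℱ k] =ᵐ[ℙ] 0)
    {t : ℝ} (ht : 0 < t) :
    ℙ {ω | t ≤ ∑ k ∈ Finset.Ico a b, V k ω} ≤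
      ENNReal.ofReal (exp (-t ^ 2 / (2 * ∑ k ∈ Finset.Ico a b, (c k) ^ 2))) := by
  have hmgf := saUT_azuma_mgf ℱ V c a hmeas hc hbV h0
  set Sq := ∑ k ∈ Finset.Ico a b, (c k) ^ 2 with hSq_def
  have hSq : 0 < Sq := by
    apply Finset.sum_pos
    · intro k hk
      exact pow_pos (hc k (Finset.mem_Ico.mp hk).1) 2
    · exact ⟨a, Finset.mem_Ico.mpr ⟨le_refl a, hab⟩⟩
  set lam := t / Sq with hlam_def
  have hlam : 0 < lam := div_pos ht hSq
  set f := fun ω => exp (lam * ∑ k ∈ Finset.Ico a b, V k ω) with hf_def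
  have hfsm : AEStronglyMeasurable f ℙ := by
    have hsum : StronglyMeasurable (fun ω => ∑ k ∈ Finset.Ico a b, V k ω) := by
      apply Finset.stronglyMeasurable_fun_sum
      intro k _
      exact (hmeas k).mono (ℱ.le (k + 1))
    exact ((Real.continuous_exp.comp
      (continuous_const.mul continuous_id)).comp_stronglyMeasurable hsum).aestronglyMeasurable
  have hfbd : ∀ᵐ ω ∂ℙ, |f ω| ≤ exp (|lam| * ∑ k ∈ Finset.Ico a b, |c k|) := by
    have := ae_all_iff.mpr (fun k : ℕ => ae_all_iff.mpr (fun hk : a ≤ k => hbV k hk))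
    filter_upwards [this] with ω hω
    rw [abs_of_pos (Real.exp_pos _)]
    apply Real.exp_le_exp.mpr
    calc lam * ∑ k ∈ Finset.Ico a b, V k ω ≤ |lam * ∑ k ∈ Finset.Ico a b, V k ω| := le_abs_self _
      _ = |lam| * |∑ k ∈ Finset.Ico a b, V k ω| := abs_mul _ _
      _ ≤ |lam| * ∑ k ∈ Finset.Ico a b, |c k| := by
          apply mul_le_mul_of_nonneg_left _ (abs_nonneg _)
          refine (Finset.abs_sum_le_sum_abs _ _).trans (Finset.sum_le_sum ?_)
          intro k hk
          exact ((hω k) (Finset.mem_Ico.mp hk).1).trans (le_abs_self _)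
  have hfint : Integrable f ℙ := saUT_integrable_of_ae_bound hfsm hfbd
  have hmarkov := mul_meas_ge_le_integral_of_nonneg
    (Eventually.of_forall fun ω => (Real.exp_pos _).le) hfint (exp (lam * t))
  have hsub : ℙ {ω | t ≤ ∑ k ∈ Finset.Ico a b, V k ω} ≤ ℙ {ω | exp (lam * t) ≤ f ω} := by
    apply measure_mono
    intro ω hω
    simp only [Set.mem_setOf_eq] at hω ⊢
    exact Real.exp_le_exp.mpr (mul_le_mul_of_nonneg_left hω hlam.le)
  have hint_le : ∫ ω, f ω ∂ℙ ≤ exp (lam ^ 2 * Sq / 2) := hmgf lam b hab.le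
  have hne : ℙ {ω | exp (lam * t) ≤ f ω} ≠ ⊤ := measure_ne_top _ _
  have htoReal : (ℙ {ω | exp (lam * t) ≤ f ω}).toReal ≤ exp (-t ^ 2 / (2 * Sq)) := by
    have h1 : exp (lam * t) * (ℙ {ω | exp (lam * t) ≤ f ω}).toReal ≤ exp (lam ^ 2 * Sq / 2) :=
      hmarkov.trans hint_le
    have h2 : (ℙ {ω | exp (lam * t) ≤ f ω}).toReal ≤ exp (lam ^ 2 * Sq / 2) / exp (lam * t) := by
      rw [le_div_iff₀ (Real.exp_pos _)]
      linarith [h1]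
    refine h2.trans (le_of_eq ?_)
    rw [← Real.exp_sub]
    congr 1
    rw [hlam_def]
    field_simp
    ring
  calc ℙ {ω | t ≤ ∑ k ∈ Finset.Ico a b, V k ω} ≤ ℙ {ω | exp (lam * t) ≤ f ω} := hsub
    _ = ENNReal.ofReal ((ℙ {ω | exp (lam * t) ≤ f ω}).toReal) := (ENNReal.ofReal_toReal hne).symm
    _ ≤ ENNReal.ofReal (exp (-t ^ 2 / (2 * Sq))) := ENNReal.ofReal_le_ofReal htoReal

lemma saUT_tele {a b : ℕ} (h : a ≤ b) (f : ℕ → ℝ) :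
    ∑ k ∈ Finset.Ico a b, (f (k + 1) - f k) = f b - f a := by
  induction b, h using Nat.le_induction with
  | base => simp
  | succ b hab IH => rw [Finset.sum_Ico_succ_top hab, IH]; ring

lemma saUT_harmonic_low {a b : ℕ} (h : a ≤ b) :
    Real.log (b + 1) - Real.log (a + 1) ≤ ∑ k ∈ Finset.Ico a b, 1 / ((k : ℝ) + 1) := by
  have htel := saUT_tele h (fun k => Real.log (k + 1))
  rw [← htel]
  apply Finset.sum_le_sum
  intro k _
  have h2 : Real.log ((k:ℝ) + 1 + 1) - Real.log ((k:ℝ) + 1) =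
      Real.log (((k:ℝ) + 1 + 1)/((k:ℝ) + 1)) := by
    rw [Real.log_div (by positivity) (by positivity)]
  push_cast
  rw [h2]
  have h3 : ((k:ℝ) + 1 + 1)/((k:ℝ) + 1) = 1 + 1/((k:ℝ) + 1) := by field_simp
  rw [h3]
  have := Real.log_le_sub_one_of_pos (x := 1 + 1/((k:ℝ) + 1)) (by positivity)
  linarith

lemma saUT_invsq_up {a b : ℕ} (ha : 1 ≤ a) :
    ∑ k ∈ Finset.Ico a b, 1 / ((k : ℝ)) ^ 2 ≤ 2 / (a : ℝ) := by
  have ha0 : (0:ℝ) < a := by exact_mod_cast ha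
  rcases le_or_gt a b with hab | hab
  · have htel := saUT_tele hab (fun k => -(2 / (k : ℝ)))
    have h1 : ∑ k ∈ Finset.Ico a b, 1 / ((k : ℝ)) ^ 2 ≤
        ∑ k ∈ Finset.Ico a b, (-(2 / ((k + 1 : ℕ) : ℝ)) - -(2 / (k : ℝ))) := by
      apply Finset.sum_le_sum
      intro k hk
      have hk1 : 1 ≤ k := le_trans ha (Finset.mem_Ico.mp hk).1
      have hk0 : (1:ℝ) ≤ (k:ℝ) := by exact_mod_cast hk1
      push_cast
      have h2 : -(2 / ((k:ℝ) + 1)) - -(2 / (k:ℝ)) = 2 / ((k:ℝ) * ((k:ℝ) + 1)) := by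
        field_simp; ring
      rw [h2, div_le_div_iff₀ (by positivity) (by positivity)]
      nlinarith
    rw [htel] at h1
    have hb0 : (0:ℝ) ≤ 2 / (b:ℝ) := by positivity
    linarith
  · rw [Finset.Ico_eq_empty (by omega)]
    simp
    positivity

end saUT

set_option maxHeartbeats 1600000 in
/-- Upper large deviation inequality for an unbounded stochastic approximation
algorithm in the case K_{gl} > K_u. -/
theorem sa_upper_tail_large_Kgl
    {Ω : Type*} {m0 : MeasurableSpace Ω} {ℙ : Measure Ω} [IsProbabilityMeasure ℙ]
    (ℱ : Filtration ℕ m0)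
    (X γ U : ℕ → Ω → ℝ) (g : ℝ → ℝ) (x0 : ℝ)
    (hX_meas : ∀ n : ℕ, Measurable[ℱ n] (X n))
    (hγ_meas : ∀ n : ℕ, Measurable[ℱ n] (γ n))
    (hU_meas : ∀ n : ℕ, Measurable[ℱ n] (U n))
    (hX0 : ∀ ω, X 0 ω = x0)
    (hrec : ∀ (n : ℕ) ω, X (n + 1) ω = X n ω + γ (n + 1) ω * (g (X n ω) + U (n + 1) ω))
    (ul uu Ku Ke : ℝ) (hul : 0 < ul) (huu : 0 < uu) (hKu : 0 < Ku) (hKe : 0 < Ke)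
    (hγ_bound : ∀ n : ℕ, 1 ≤ n → ∀ᵐ ω ∂ℙ, ul / n ≤ γ n ω ∧ γ n ω ≤ uu / n)
    (hU_bound : ∀ n : ℕ, ∀ᵐ ω ∂ℙ, |U (n + 1) ω| ≤ Ku)
    (hcond : ∀ n : ℕ, 1 ≤ n →
      ∀ᵐ ω ∂ℙ, |(ℙ[fun ω' => γ (n + 1) ω' * U (n + 1) ω' | ℱ n]) ω| ≤ Ke / (n : ℝ) ^ 2)
    (hg_anti : Antitone g)
    (xstar : ℝ) (hxs_zero : g xstar = 0)
    (hg_pos : ∀ x < xstar, 0 < g x) (hg_neg : ∀ x, xstar < x → g x < 0)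
    (Kgl : ℝ) (hKgl : 0 < Kgl)
    (hlim : Tendsto g atTop (nhds (-Kgl)))
    (hcase : Ku < Kgl) :
    ∀ ε > (0:ℝ), ∃ a > (0:ℝ), ∀ᶠ n in atTop,
      ℙ {ω | X (n + 1) ω - xstar > ε} ≤ ENNReal.ofReal (Real.exp (-a * n)) := by
  intro ε hε
  -- g is bounded below by -Kgl
  have hg_lb : ∀ x, -Kgl ≤ g x := by
    intro x
    exact le_of_tendsto hlim (eventually_atTop.2 ⟨x, fun y hy => hg_anti hy⟩)
  -- beyond M, g < -Ku
  obtain ⟨M, hM⟩ : ∃ M : ℝ, ∀ x, M ≤ x → g x < -Ku := by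
    have h1 : ∀ᶠ x in atTop, g x < -Ku := hlim.eventually_lt_const (by linarith)
    exact eventually_atTop.mp h1
  -- uniform upper bound on g along trajectories
  have keyG : ∃ G : ℝ, 0 < G ∧ ∀ x gam u : ℕ → ℝ, x 0 = x0 →
      (∀ k, x (k + 1) = x k + gam k * (g (x k) + u k)) →
      (∀ k : ℕ, ul / ((k:ℝ) + 1) ≤ gam k ∧ gam k ≤ uu / ((k:ℝ) + 1)) →
      (∀ k, |u k| ≤ Ku) → ∀ k, g (x k) ≤ G := by
    by_cases hsup : ∃ x1, Ku < g x1
    · obtain ⟨x1, hx1⟩ := hsup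
      set L := min x0 (x1 - uu * (Kgl + Ku)) with hL_def
      refine ⟨max (g L) 1, lt_of_lt_of_le one_pos (le_max_right _ _), ?_⟩
      intro x gam u hx0' hstep hgam hu
      have hgam_pos : ∀ k, 0 < gam k :=
        fun k => lt_of_lt_of_le (by positivity) (hgam k).1
      have hgam_le : ∀ k, gam k ≤ uu := by
        intro k
        refine (hgam k).2.trans (div_le_self huu.le ?_)
        have : (0:ℝ) ≤ (k:ℝ) := Nat.cast_nonneg k
        linarith
      have hlb : ∀ k, L ≤ x k := by
        intro k
        induction k with
        | zero => rw [hx0']; exact min_le_left _ _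
        | succ k IH =>
          rcases lt_or_ge (x k) x1 with h | h
          · have hgk : Ku < g (x k) := lt_of_lt_of_le hx1 (hg_anti h.le)
            have hnn : 0 ≤ gam k * (g (x k) + u k) := by
              have := (abs_le.mp (hu k)).1
              exact mul_nonneg (hgam_pos k).le (by linarith)
            rw [hstep k]; linarith
          · have hglb := hg_lb (x k)
            have h1 : -(Kgl + Ku) ≤ g (x k) + u k := by
              have := (abs_le.mp (hu k)).1; linarith
            have hincr : -(uu * (Kgl + Ku)) ≤ gam k * (g (x k) + u k) := by
              rcases le_or_gt 0 (g (x k) + u k) with h2 | h2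
              · have := mul_nonneg (hgam_pos k).le h2
                nlinarith
              · nlinarith [hgam_le k, hgam_pos k]
            have hL1 : L ≤ x1 - uu * (Kgl + Ku) := min_le_right _ _
            rw [hstep k]; linarith
      intro k
      exact le_trans (hg_anti (hlb k)) (le_max_left _ _)
    · push_neg at hsup
      exact ⟨max Ku 1, lt_of_lt_of_le one_pos (le_max_right _ _),
        fun x gam u _ _ _ _ k => (hsup _).trans (le_max_left _ _)⟩
  obtain ⟨G, hG0, hGtraj⟩ := keyG
  obtain ⟨C, hC_def⟩ : ∃ y : ℝ, y = uu * (G + Ku + Kgl) := ⟨_, rfl⟩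
  have hC0 : 0 < C := by rw [hC_def]; positivity
  obtain ⟨B, hB_def⟩ : ∃ y : ℝ, y = max x0 (M + C) := ⟨_, rfl⟩
  -- trajectory bounds: upper bound B and increment bounds
  have keyTraj : ∀ x gam u : ℕ → ℝ, x 0 = x0 →
      (∀ k, x (k + 1) = x k + gam k * (g (x k) + u k)) →
      (∀ k : ℕ, ul / ((k:ℝ) + 1) ≤ gam k ∧ gam k ≤ uu / ((k:ℝ) + 1)) →
      (∀ k, |u k| ≤ Ku) →
      ∀ k, x k ≤ B ∧ x (k + 1) - x k ≤ C / ((k:ℝ) + 1) := by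
    intro x gam u hx0' hstep hgam hu
    have hgb := hGtraj x gam u hx0' hstep hgam hu
    have hgam_pos : ∀ k, 0 < gam k :=
      fun k => lt_of_lt_of_le (by positivity) (hgam k).1
    have hstep_up : ∀ k, x (k + 1) - x k ≤ C / ((k:ℝ) + 1) := by
      intro k
      have hk0 : (0:ℝ) < (k:ℝ) + 1 := by positivity
      have hub : g (x k) + u k ≤ G + Ku := by
        have := (abs_le.mp (hu k)).2; have := hgb k; linarith
      have hCk : C / ((k:ℝ) + 1) = (uu / ((k:ℝ) + 1)) * (G + Ku + Kgl) := by
        rw [hC_def]; ring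
      rw [hstep k]
      rcases le_or_gt 0 (g (x k) + u k) with h2 | h2
      · have h3 : gam k * (g (x k) + u k) ≤ (uu / ((k:ℝ) + 1)) * (G + Ku) := by
          apply mul_le_mul (hgam k).2 hub h2
          positivity
        have h4 : (uu / ((k:ℝ) + 1)) * (G + Ku) ≤ C / ((k:ℝ) + 1) := by
          rw [hCk]
          apply mul_le_mul_of_nonneg_left (by linarith) (by positivity)
        linarith
      · have h3 : gam k * (g (x k) + u k) ≤ 0 :=
          mul_nonpos_of_nonneg_of_nonpos (hgam_pos k).le h2.le
        have : (0:ℝ) ≤ C / ((k:ℝ) + 1) := by positivity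
        linarith
    have hB : ∀ k, x k ≤ B := by
      intro k
      induction k with
      | zero => rw [hx0', hB_def]; exact le_max_left _ _
      | succ k IH =>
        rcases le_or_gt M (x k) with h | h
        · have hgk : g (x k) < -Ku := hM _ h
          have h2 : g (x k) + u k ≤ 0 := by
            have := (abs_le.mp (hu k)).2; linarith
          have h3 : gam k * (g (x k) + u k) ≤ 0 :=
            mul_nonpos_of_nonneg_of_nonpos (hgam_pos k).le h2
          rw [hstep k]; linarith
        · have h2 := hstep_up k
          have hk0 : (0:ℝ) < (k:ℝ) + 1 := by positivity
          have h3 : C / ((k:ℝ) + 1) ≤ C := div_le_self hC0.le (by linarith [Nat.cast_nonneg (α := ℝ) k])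
          have h4 : x (k + 1) ≤ x k + C := by linarith
          have h5 : x k + C ≤ M + C := by linarith
          rw [hB_def]
          exact h4.trans (h5.trans (le_max_right _ _))
    exact fun k => ⟨hB k, hstep_up k⟩
  -- threshold and constants depending on ε
  obtain ⟨sthr, hsthr_def⟩ : ∃ y : ℝ, y = xstar + ε / 2 := ⟨_, rfl⟩
  have hsx : xstar < sthr := by rw [hsthr_def]; linarith only [hε]
  obtain ⟨cc, hcc_def⟩ : ∃ y : ℝ, y = -g sthr := ⟨_, rfl⟩
  have hcc : 0 < cc := by
    have := hg_neg sthr hsx; rw [hcc_def]; linarith only [this]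
  obtain ⟨C2, hC2_def⟩ : ∃ y : ℝ, y = uu * Ku + Ke := ⟨_, rfl⟩
  have hC20 : 0 < C2 := by rw [hC2_def]; positivity
  obtain ⟨J0, hJ0⟩ := exists_nat_ge (2 * Real.exp ((B - sthr + 1 + 2 * Ke) / (cc * ul)))
  obtain ⟨J, hJ_def⟩ : ∃ j : ℕ, j = J0 + 2 := ⟨_, rfl⟩
  have hJ2 : 2 ≤ J := by rw [hJ_def]; omega
  have hJge : 2 * Real.exp ((B - sthr + 1 + 2 * Ke) / (cc * ul)) ≤ (J:ℝ) := by
    refine hJ0.trans ?_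
    rw [hJ_def]; exact_mod_cast Nat.le_add_right J0 2
  have hJr : (0:ℝ) < (J:ℝ) := by
    have : 0 < J := by omega
    exact_mod_cast this
  obtain ⟨t, ht_def⟩ : ∃ y : ℝ, y = min (ε / 4) 1 := ⟨_, rfl⟩
  have ht : 0 < t := by rw [ht_def]; exact lt_min (by linarith only [hε]) one_pos
  obtain ⟨a0, ha0_def⟩ : ∃ y : ℝ, y = t ^ 2 / (4 * C2 ^ 2) := ⟨_, rfl⟩
  have ha00 : 0 < a0 := by rw [ha0_def]; positivity
  refine ⟨a0 / (2 * (J:ℝ)), div_pos ha00 (by positivity), ?_⟩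
  -- definitions of the compensator W and martingale differences V
  obtain ⟨W, hW_def⟩ : ∃ y : ℕ → Ω → ℝ,
      y = fun k => ℙ[fun ω' => γ (k + 1) ω' * U (k + 1) ω' | ℱ k] := ⟨_, rfl⟩
  obtain ⟨V, hV_def⟩ : ∃ y : ℕ → Ω → ℝ,
      y = fun k ω => γ (k + 1) ω * U (k + 1) ω - W k ω := ⟨_, rfl⟩
  have hVmeas : ∀ k, StronglyMeasurable[ℱ (k + 1)] (V k) := by
    intro k
    rw [hV_def]
    apply StronglyMeasurable.sub
    · exact ((hγ_meas (k + 1)).mul (hU_meas (k + 1))).stronglyMeasurable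
    · rw [hW_def]
      exact stronglyMeasurable_condExp.mono (ℱ.mono (Nat.le_succ k))
  have hE1 : ∀ᵐ ω ∂ℙ, ∀ k : ℕ, ul / ((k:ℝ) + 1) ≤ γ (k + 1) ω ∧ γ (k + 1) ω ≤ uu / ((k:ℝ) + 1) := by
    rw [ae_all_iff]
    intro k
    filter_upwards [hγ_bound (k + 1) (by omega)] with ω hω
    push_cast at hω
    exact hω
  have hE2 : ∀ᵐ ω ∂ℙ, ∀ k : ℕ, |U (k + 1) ω| ≤ Ku := ae_all_iff.mpr hU_bound
  have hE3 : ∀ᵐ ω ∂ℙ, ∀ k : ℕ, 1 ≤ k → |W k ω| ≤ Ke / (k:ℝ) ^ 2 := by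
    rw [ae_all_iff]
    intro k
    rcases Nat.eq_zero_or_pos k with hk | hk
    · subst hk
      exact Eventually.of_forall (fun ω h => absurd h (by omega))
    · filter_upwards [hcond k hk] with ω hω
      intro _
      rw [hW_def]
      exact hω
  have hγU_int : ∀ k : ℕ, Integrable (fun ω => γ (k + 1) ω * U (k + 1) ω) ℙ := by
    intro k
    apply saUT_integrable_of_ae_bound (C := uu * Ku)
    · exact (((hγ_meas (k + 1)).mul (hU_meas (k + 1))).mono (ℱ.le (k + 1)) le_rfl).aestronglyMeasurable
    · filter_upwards [hE1, hE2] with ω h1 h2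
      have hγk := h1 k
      have h3 : 0 ≤ γ (k + 1) ω := le_trans (by positivity) hγk.1
      have h4 : γ (k + 1) ω ≤ uu := by
        refine hγk.2.trans (div_le_self huu.le ?_)
        linarith [Nat.cast_nonneg (α := ℝ) k]
      rw [abs_mul, abs_of_nonneg h3]
      exact mul_le_mul h4 (h2 k) (abs_nonneg _) huu.le
  have h0 : ∀ k : ℕ, ℙ[V k | ℱ k] =ᵐ[ℙ] 0 := by
    intro k
    have h2 : ℙ[W k|ℱ k] = W k := by
      rw [hW_def]
      exact condExp_of_stronglyMeasurable (ℱ.le k) stronglyMeasurable_condExp integrable_condExp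
    have h1 : V k = (fun ω => γ (k + 1) ω * U (k + 1) ω) - W k := by
      rw [hV_def]; rfl
    rw [h1]
    have hWint : Integrable (W k) ℙ := by rw [hW_def]; exact integrable_condExp
    refine (condExp_sub (hγU_int k) hWint (ℱ k)).trans ?_
    rw [h2, hW_def]
    apply Eventually.of_forall
    intro ω
    simp
  have hVb : ∀ k : ℕ, 1 ≤ k → ∀ᵐ ω ∂ℙ, |V k ω| ≤ C2 / (k:ℝ) := by
    intro k hk
    have hk1 : (1:ℝ) ≤ (k:ℝ) := by exact_mod_cast hk
    filter_upwards [hE1, hE2, hE3] with ω h1 h2 h3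
    have hγk := h1 k
    have h4 : 0 ≤ γ (k + 1) ω := le_trans (by positivity) hγk.1
    have h5 : |γ (k + 1) ω * U (k + 1) ω| ≤ (uu / ((k:ℝ) + 1)) * Ku := by
      rw [abs_mul, abs_of_nonneg h4]
      exact mul_le_mul hγk.2 (h2 k) (abs_nonneg _) (by positivity)
    have h6 := h3 k hk
    have h7 : |V k ω| ≤ |γ (k + 1) ω * U (k + 1) ω| + |W k ω| := by
      rw [hV_def]; exact abs_sub _ _
    have h8 : (uu / ((k:ℝ) + 1)) * Ku ≤ uu * Ku / (k:ℝ) := by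
      rw [div_mul_eq_mul_div, div_le_div_iff₀ (by linarith only [hk1]) (by linarith only [hk1])]
      nlinarith only [mul_nonneg huu.le hKu.le]
    have h9 : Ke / (k:ℝ) ^ 2 ≤ Ke / (k:ℝ) := by
      rw [div_le_div_iff₀ (by positivity) (by linarith only [hk1])]
      have h9' : (0:ℝ) ≤ Ke * (((k:ℝ) - 1) * (k:ℝ)) :=
        mul_nonneg hKe.le (mul_nonneg (by linarith only [hk1]) (by linarith only [hk1]))
      nlinarith only [h9']
    have h10 : C2 / (k:ℝ) = uu * Ku / (k:ℝ) + Ke / (k:ℝ) := by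
      rw [hC2_def, add_div]
    linarith only [h5, h6, h7, h8, h9, h10]
  -- eventually facts
  have ev1 : ∀ᶠ n : ℕ in atTop, (J:ℝ) * (4 * (C + 2 * Ke) / ε) ≤ (n:ℝ) :=
    tendsto_natCast_atTop_atTop.eventually_ge_atTop _
  have ev2 : ∀ᶠ n : ℕ in atTop, 2 * J ≤ n := eventually_ge_atTop _
  have ev3 : ∀ᶠ n : ℕ in atTop, ((n:ℝ) + 1) * Real.exp (-(a0 / (2 * (J:ℝ))) * (n:ℝ)) ≤ 1 := by
    obtain ⟨b, hb_def⟩ : ∃ y : ℝ, y = a0 / (2 * (J:ℝ)) := ⟨_, rfl⟩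
    have hb : 0 < b := by rw [hb_def]; exact div_pos ha00 (by positivity)
    filter_upwards [tendsto_natCast_atTop_atTop.eventually_ge_atTop (4 / b ^ 2),
      tendsto_natCast_atTop_atTop.eventually_ge_atTop 1] with n hn1 hn2
    rw [← hb_def]
    have h1 : 1 + b * (n:ℝ) / 2 ≤ Real.exp (b * (n:ℝ) / 2) := by
      have := Real.add_one_le_exp (b * (n:ℝ) / 2)
      linarith
    have h1nn : (0:ℝ) ≤ 1 + b * (n:ℝ) / 2 := by positivity
    have h2 : ((n:ℝ) + 1) ≤ Real.exp (b * (n:ℝ)) := by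
      have h3 : Real.exp (b * (n:ℝ)) = Real.exp (b * (n:ℝ) / 2) * Real.exp (b * (n:ℝ) / 2) := by
        rw [← Real.exp_add]; congr 1; ring
      have h4 : (1 + b * (n:ℝ) / 2) * (1 + b * (n:ℝ) / 2) ≤
          Real.exp (b * (n:ℝ) / 2) * Real.exp (b * (n:ℝ) / 2) :=
        mul_le_mul h1 h1 h1nn (Real.exp_pos _).le
      have h5 : 4 / b ^ 2 ≤ (n:ℝ) := hn1
      rw [h3]
      have h6 : 4 ≤ b ^ 2 * (n:ℝ) := by
        rw [div_le_iff₀ (by positivity)] at h5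
        linarith only [h5]
      have hn0 : (0:ℝ) ≤ (n:ℝ) := Nat.cast_nonneg n
      have h6' : (0:ℝ) ≤ (b ^ 2 * (n:ℝ) - 4) * (n:ℝ) :=
        mul_nonneg (by linarith only [h6]) hn0
      nlinarith only [h4, h6', mul_nonneg hb.le hn0]
    have h7 : ((n:ℝ) + 1) * Real.exp (-b * (n:ℝ)) ≤ Real.exp (b * (n:ℝ)) * Real.exp (-b * (n:ℝ)) :=
      mul_le_mul_of_nonneg_right h2 (Real.exp_pos _).le
    have h8 : Real.exp (b * (n:ℝ)) * Real.exp (-b * (n:ℝ)) = 1 := by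
      rw [← Real.exp_add]
      have : b * (n:ℝ) + -b * (n:ℝ) = 0 := by ring
      rw [this, Real.exp_zero]
    rw [h8] at h7
    exact h7
  filter_upwards [ev1, ev2, ev3] with n hn1 hn2 hn3
  obtain ⟨m, hm_def⟩ : ∃ y : ℕ, y = n / J + 1 := ⟨_, rfl⟩
  have hm1 : 1 ≤ m := by rw [hm_def]; exact Nat.succ_le_succ (Nat.zero_le _)
  have hmn : m ≤ n := by
    have h4 : n / J ≤ n / 2 := Nat.div_le_div_left hJ2 (by norm_num)
    have h6 : 4 ≤ n := le_trans (by omega : 4 ≤ 2 * J) hn2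
    rw [hm_def]
    calc n / J + 1 ≤ n / 2 + 1 := Nat.succ_le_succ h4
      _ ≤ n := by omega
  have hnJm : n < J * m := by
    have h5 := Nat.div_add_mod n J
    have h6 : n % J < J := Nat.mod_lt _ (by omega)
    rw [hm_def, Nat.mul_succ]
    omega
  have hJm1 : J * (m + 1) ≤ n + 2 * J := by
    have h5 : J * (n / J) ≤ n := by
      rw [mul_comm]; exact Nat.div_mul_le_self n J
    calc J * (m + 1) = J * (n / J) + 2 * J := by rw [hm_def]; ring
      _ ≤ n + 2 * J := Nat.add_le_add_right h5 _
  have hmr0 : (0:ℝ) < (m:ℝ) := by exact_mod_cast hm1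
  have hm1r : (1:ℝ) ≤ (m:ℝ) := by exact_mod_cast hm1
  have hmlow : (n:ℝ) / (J:ℝ) ≤ (m:ℝ) := by
    rw [div_le_iff₀ hJr]
    have h7 : (n:ℝ) ≤ (J:ℝ) * (m:ℝ) := by exact_mod_cast hnJm.le
    linarith only [h7]
  have hm4 : (C + 2 * Ke) / (m:ℝ) ≤ ε / 4 := by
    have h7 : 4 * (C + 2 * Ke) / ε ≤ (m:ℝ) := by
      have h8 : (J:ℝ) * (4 * (C + 2 * Ke) / ε) ≤ (n:ℝ) := hn1
      have h9 : 4 * (C + 2 * Ke) / ε ≤ (n:ℝ) / (J:ℝ) := by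
        rw [le_div_iff₀ hJr]
        calc 4 * (C + 2 * Ke) / ε * (J:ℝ) = (J:ℝ) * (4 * (C + 2 * Ke) / ε) := by ring
          _ ≤ (n:ℝ) := h8
      exact h9.trans hmlow
    rw [div_le_iff₀ hmr0]
    rw [div_le_iff₀ hε] at h7
    linarith only [h7]
  have hKem : 2 * Ke / (m:ℝ) ≤ 2 * Ke := by
    rw [div_le_iff₀ hmr0]
    nlinarith only [hKe.le, hm1r]
  have hCm : C / (m:ℝ) ≤ ε / 4 := by
    calc C / (m:ℝ) ≤ (C + 2 * Ke) / (m:ℝ) := by gcongr; linarith only [hKe]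
      _ ≤ ε / 4 := hm4
  -- key pointwise claim
  have key : ∀ ω, (∀ k : ℕ, ul / ((k:ℝ) + 1) ≤ γ (k + 1) ω ∧ γ (k + 1) ω ≤ uu / ((k:ℝ) + 1)) →
      (∀ k : ℕ, |U (k + 1) ω| ≤ Ku) → (∀ k : ℕ, 1 ≤ k → |W k ω| ≤ Ke / (k:ℝ) ^ 2) →
      ε < X (n + 1) ω - xstar →
      ∃ j, j ∈ Finset.Icc m n ∧ t ≤ ∑ k ∈ Finset.Ico j (n + 1), V k ω := by
    intro ω hγω hUω hWω hA
    have htraj := keyTraj (fun k => X k ω) (fun k => γ (k + 1) ω) (fun k => U (k + 1) ω)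
      (hX0 ω) (fun k => hrec k ω) hγω hUω
    have hXB : ∀ k, X k ω ≤ B := fun k => (htraj k).1
    have hXstep : ∀ k : ℕ, X (k + 1) ω - X k ω ≤ C / ((k:ℝ) + 1) := fun k => (htraj k).2
    have hγnn : ∀ k : ℕ, 0 ≤ γ (k + 1) ω := fun k => le_trans (by positivity) (hγω k).1
    have hdrel : ∀ k : ℕ, X (k + 1) ω - X k ω = γ (k + 1) ω * g (X k ω) + W k ω + V k ω := by
      intro k
      rw [hrec k ω, hV_def]
      ring
    have htele : ∀ j : ℕ, j ≤ n + 1 →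
        ∑ k ∈ Finset.Ico j (n + 1), V k ω = (X (n + 1) ω - X j ω)
          - ∑ k ∈ Finset.Ico j (n + 1), γ (k + 1) ω * g (X k ω)
          - ∑ k ∈ Finset.Ico j (n + 1), W k ω := by
      intro j hj
      have h8 := saUT_tele hj (fun k => X k ω)
      have h9 : ∑ k ∈ Finset.Ico j (n + 1), (X (k + 1) ω - X k ω)
          = ∑ k ∈ Finset.Ico j (n + 1), (γ (k + 1) ω * g (X k ω) + W k ω + V k ω) :=
        Finset.sum_congr rfl (fun k _ => hdrel k)
      rw [h8] at h9
      simp only [Finset.sum_add_distrib] at h9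
      linarith only [h9]
    have hWsum : ∀ j : ℕ, m ≤ j → |∑ k ∈ Finset.Ico j (n + 1), W k ω| ≤ 2 * Ke / (m:ℝ) := by
      intro j hj
      have hj1 : 1 ≤ j := le_trans hm1 hj
      have hjr : (0:ℝ) < (j:ℝ) := by exact_mod_cast hj1
      have h10 : |∑ k ∈ Finset.Ico j (n + 1), W k ω| ≤
          ∑ k ∈ Finset.Ico j (n + 1), Ke * (1 / (k:ℝ) ^ 2) := by
        refine (Finset.abs_sum_le_sum_abs _ _).trans (Finset.sum_le_sum fun k hk => ?_)
        have hk1 : 1 ≤ k := le_trans hj1 (Finset.mem_Ico.mp hk).1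
        rw [mul_one_div]
        exact hWω k hk1
      rw [← Finset.mul_sum] at h10
      have h11 := saUT_invsq_up (a := j) (b := n + 1) hj1
      have hjm : (m:ℝ) ≤ (j:ℝ) := by exact_mod_cast hj
      calc |∑ k ∈ Finset.Ico j (n + 1), W k ω|
          ≤ Ke * (2 / (j:ℝ)) := h10.trans (mul_le_mul_of_nonneg_left h11 hKe.le)
        _ ≤ Ke * (2 / (m:ℝ)) := by gcongr
        _ = 2 * Ke / (m:ℝ) := by ring
    have hgsthr : g sthr = -cc := by rw [hcc_def]; ring
    obtain ⟨SS, hSS_def⟩ : ∃ y : Finset ℕ,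
      y = (Finset.Icc m n).filter (fun k => X k ω ≤ sthr) := ⟨_, rfl⟩
    by_cases hne : SS.Nonempty
    · obtain ⟨T, hT_def⟩ : ∃ y : ℕ, y = SS.max' hne := ⟨_, rfl⟩
      have hTmem : T ∈ SS := by rw [hT_def]; exact SS.max'_mem hne
      rw [hSS_def, Finset.mem_filter, Finset.mem_Icc] at hTmem
      obtain ⟨⟨hTm, hTn⟩, hTs⟩ := hTmem
      have habove : ∀ k : ℕ, T < k → k ≤ n → sthr < X k ω := by
        intro k hk1 hk2
        by_contra hcon
        push_neg at hcon
        have hkSS : k ∈ SS := by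
          rw [hSS_def, Finset.mem_filter, Finset.mem_Icc]
          exact ⟨⟨le_trans hTm hk1.le, hk2⟩, hcon⟩
        have := Finset.le_max' SS k hkSS
        rw [← hT_def] at this
        omega
      have hXT1 : X (T + 1) ω ≤ sthr + C / (m:ℝ) := by
        have h12 := hXstep T
        have hTr : (m:ℝ) ≤ (T:ℝ) + 1 := by
          have : (m:ℝ) ≤ (T:ℝ) := by exact_mod_cast hTm
          linarith only [this]
        have h13 : C / ((T:ℝ) + 1) ≤ C / (m:ℝ) := by gcongr
        linarith only [h12, h13, hTs]
      rcases eq_or_lt_of_le hTn with hTeq | hTlt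
      · exfalso
        rw [hTeq] at hXT1
        have h14 : xstar + ε = sthr + ε / 2 := by rw [hsthr_def]; ring
        linarith only [hXT1, h14, hA, hCm, hε]
      · refine ⟨T + 1, ?_, ?_⟩
        · rw [Finset.mem_Icc]; omega
        · rw [htele (T + 1) (by omega)]
          have hdrift : ∑ k ∈ Finset.Ico (T + 1) (n + 1), γ (k + 1) ω * g (X k ω) ≤ 0 := by
            apply Finset.sum_nonpos
            intro k hk
            obtain ⟨hk1, hk2⟩ := Finset.mem_Ico.mp hk
            have hXk : sthr < X k ω := habove k hk1 (by omega)
            have hgk : g (X k ω) ≤ 0 := by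
              have := hg_anti hXk.le
              rw [hgsthr] at this
              linarith only [this, hcc]
            exact mul_nonpos_of_nonneg_of_nonpos (hγnn k) hgk
          have hWs := abs_le.mp (hWsum (T + 1) (by omega))
          have hXn1 : sthr + ε / 2 < X (n + 1) ω := by
            rw [hsthr_def]; linarith only [hA]
          have hCKm : C / (m:ℝ) + 2 * Ke / (m:ℝ) = (C + 2 * Ke) / (m:ℝ) := by ring
          have htq : t ≤ ε / 4 := by rw [ht_def]; exact min_le_left _ _
          linarith only [hdrift, hXT1, hXn1, hWs.2, hCKm, hm4, htq]
    · have hall : ∀ k : ℕ, m ≤ k → k ≤ n → sthr < X k ω := by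
        intro k hk1 hk2
        by_contra hcon
        push_neg at hcon
        exact hne ⟨k, by rw [hSS_def, Finset.mem_filter, Finset.mem_Icc]; exact ⟨⟨hk1, hk2⟩, hcon⟩⟩
      refine ⟨m, Finset.mem_Icc.mpr ⟨le_refl m, hmn⟩, ?_⟩
      rw [htele m (by omega)]
      have hdrift : ∑ k ∈ Finset.Ico m (n + 1), γ (k + 1) ω * g (X k ω) ≤
          ∑ k ∈ Finset.Ico m (n + 1), (ul / ((k:ℝ) + 1)) * (-cc) := by
        apply Finset.sum_le_sum
        intro k hk
        obtain ⟨hk1, hk2⟩ := Finset.mem_Ico.mp hk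
        have hXk : sthr < X k ω := hall k hk1 (by omega)
        have hgk : g (X k ω) ≤ -cc := by
          have := hg_anti hXk.le
          rw [hgsthr] at this
          exact this
        have h22 : γ (k + 1) ω * g (X k ω) ≤ (ul / ((k:ℝ) + 1)) * g (X k ω) :=
          mul_le_mul_of_nonpos_right (hγω k).1 (by linarith)
        have h23 : (ul / ((k:ℝ) + 1)) * g (X k ω) ≤ (ul / ((k:ℝ) + 1)) * (-cc) :=
          mul_le_mul_of_nonneg_left hgk (by positivity)
        linarith only [h22, h23]
      have hdrift2 : ∑ k ∈ Finset.Ico m (n + 1), (ul / ((k:ℝ) + 1)) * (-cc)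
          = -(cc * ul) * ∑ k ∈ Finset.Ico m (n + 1), 1 / ((k:ℝ) + 1) := by
        rw [Finset.mul_sum]
        apply Finset.sum_congr rfl
        intro k _
        ring
      have hharm := saUT_harmonic_low (a := m) (b := n + 1) (by omega)
      have hharm' : Real.log ((n:ℝ) + 2) - Real.log ((m:ℝ) + 1) ≤
          ∑ k ∈ Finset.Ico m (n + 1), 1 / ((k:ℝ) + 1) := by
        have : (((n + 1 : ℕ)):ℝ) + 1 = (n:ℝ) + 2 := by push_cast; ring
        rw [← this]
        exact hharm
      have hlogJ : Real.log ((J:ℝ) / 2) ≤ Real.log ((n:ℝ) + 2) - Real.log ((m:ℝ) + 1) := by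
        have h26 : (J:ℝ) * ((m:ℝ) + 1) ≤ 2 * ((n:ℝ) + 2) := by
          have h27 : (J:ℝ) * ((m:ℝ) + 1) ≤ (n:ℝ) + 2 * (J:ℝ) := by exact_mod_cast hJm1
          have h28 : (2:ℝ) * (J:ℝ) ≤ (n:ℝ) := by exact_mod_cast hn2
          linarith only [h27, h28]
        have h29 : (J:ℝ) / 2 ≤ ((n:ℝ) + 2) / ((m:ℝ) + 1) := by
          rw [div_le_div_iff₀ (by norm_num) (by linarith only [hm1r])]
          linarith only [h26]
        calc Real.log ((J:ℝ) / 2) ≤ Real.log (((n:ℝ) + 2) / ((m:ℝ) + 1)) :=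
              Real.log_le_log (by positivity) h29
          _ = Real.log ((n:ℝ) + 2) - Real.log ((m:ℝ) + 1) :=
              Real.log_div (by positivity) (by positivity)
      have hJlog : B - sthr + 1 + 2 * Ke ≤ cc * ul * Real.log ((J:ℝ) / 2) := by
        have h24 : Real.exp ((B - sthr + 1 + 2 * Ke) / (cc * ul)) ≤ (J:ℝ) / 2 := by
          linarith only [hJge]
        have h25 := (Real.le_log_iff_exp_le (by positivity : (0:ℝ) < (J:ℝ) / 2)).mpr h24
        rw [div_le_iff₀ (by positivity)] at h25
        linarith only [h25]
      have hWs := abs_le.mp (hWsum m (le_refl m))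
      have hXn1 : sthr + ε / 2 < X (n + 1) ω := by rw [hsthr_def]; linarith
      have hXm : X m ω ≤ B := hXB m
      have hccul : (0:ℝ) ≤ cc * ul := by positivity
      have hmono : -(cc * ul) * ∑ k ∈ Finset.Ico m (n + 1), 1 / ((k:ℝ) + 1) ≤
          -(cc * ul) * (Real.log ((J:ℝ) / 2)) := by
        have h31 : Real.log ((J:ℝ) / 2) ≤ ∑ k ∈ Finset.Ico m (n + 1), 1 / ((k:ℝ) + 1) :=
          le_trans hlogJ (by linarith only [hharm'])
        have h31' : (0:ℝ) ≤ cc * ul *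
            (∑ k ∈ Finset.Ico m (n + 1), 1 / ((k:ℝ) + 1) - Real.log ((J:ℝ) / 2)) :=
          mul_nonneg hccul (by linarith only [h31])
        nlinarith only [h31']
      have htq : t ≤ 1 := by rw [ht_def]; exact min_le_right _ _
      have hfin : (1:ℝ) ≤ X (n + 1) ω - X m ω
          - ∑ k ∈ Finset.Ico m (n + 1), γ (k + 1) ω * g (X k ω)
          - ∑ k ∈ Finset.Ico m (n + 1), W k ω := by
        have h32 : ∑ k ∈ Finset.Ico m (n + 1), γ (k + 1) ω * g (X k ω) ≤
            -(cc * ul) * (Real.log ((J:ℝ) / 2)) := by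
          calc ∑ k ∈ Finset.Ico m (n + 1), γ (k + 1) ω * g (X k ω)
              ≤ ∑ k ∈ Finset.Ico m (n + 1), (ul / ((k:ℝ) + 1)) * (-cc) := hdrift
            _ = -(cc * ul) * ∑ k ∈ Finset.Ico m (n + 1), 1 / ((k:ℝ) + 1) := hdrift2
            _ ≤ -(cc * ul) * (Real.log ((J:ℝ) / 2)) := hmono
        have h33 : ∑ k ∈ Finset.Ico m (n + 1), W k ω ≤ 2 * Ke := le_trans hWs.2 hKem
        nlinarith only [h32, h33, hJlog, hXn1, hXm, hε]
      linarith only [hfin, htq]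
  -- assembling the measure bound
  calc ℙ {ω | X (n + 1) ω - xstar > ε}
      ≤ ℙ (⋃ j ∈ Finset.Icc m n, {ω | t ≤ ∑ k ∈ Finset.Ico j (n + 1), V k ω}) := by
        apply measure_mono_ae
        filter_upwards [hE1, hE2, hE3] with ω h1 h2 h3
        intro hmem
        obtain ⟨j, hj, hjt⟩ := key ω h1 h2 h3 hmem
        exact Set.mem_biUnion hj hjt
    _ ≤ ∑ j ∈ Finset.Icc m n, ℙ {ω | t ≤ ∑ k ∈ Finset.Ico j (n + 1), V k ω} :=
        measure_biUnion_finset_le _ _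
    _ ≤ ∑ _j ∈ Finset.Icc m n, ENNReal.ofReal (Real.exp (-(a0 * (m:ℝ)))) := by
        apply Finset.sum_le_sum
        intro j hj
        obtain ⟨hjm, hjn⟩ := Finset.mem_Icc.mp hj
        have hj1 : 1 ≤ j := le_trans hm1 hjm
        have hAz := saUT_azuma_tail ℱ V (fun k => C2 / (k:ℝ)) j (n + 1) (by omega) hVmeas
          (fun k hk => by
            have hk1 : 1 ≤ k := le_trans hj1 hk
            have : (0:ℝ) < (k:ℝ) := by exact_mod_cast hk1
            positivity)
          (fun k hk => hVb k (le_trans hj1 hk)) h0 ht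
        refine hAz.trans (ENNReal.ofReal_le_ofReal (Real.exp_le_exp.mpr ?_))
        obtain ⟨Sq, hSq2⟩ : ∃ y : ℝ, y = ∑ k ∈ Finset.Ico j (n + 1), (C2 / (k:ℝ)) ^ 2 :=
          ⟨_, rfl⟩
        rw [← hSq2]
        have hSqpos : 0 < Sq := by
          rw [hSq2]
          apply Finset.sum_pos
          · intro k hk
            have hk1 : 1 ≤ k := le_trans hj1 (Finset.mem_Ico.mp hk).1
            have : (0:ℝ) < (k:ℝ) := by exact_mod_cast hk1
            positivity
          · exact ⟨j, Finset.mem_Ico.mpr ⟨le_refl j, by omega⟩⟩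
        have hSqle : Sq ≤ 2 * C2 ^ 2 / (m:ℝ) := by
          have h30 : Sq = C2 ^ 2 * ∑ k ∈ Finset.Ico j (n + 1), 1 / (k:ℝ) ^ 2 := by
            rw [hSq2, Finset.mul_sum]
            apply Finset.sum_congr rfl
            intro k _
            rw [div_pow]
            ring
          rw [h30]
          have h31 := saUT_invsq_up (a := j) (b := n + 1) hj1
          have hjm' : (m:ℝ) ≤ (j:ℝ) := by exact_mod_cast hjm
          calc C2 ^ 2 * ∑ k ∈ Finset.Ico j (n + 1), 1 / (k:ℝ) ^ 2
              ≤ C2 ^ 2 * (2 / (j:ℝ)) := mul_le_mul_of_nonneg_left h31 (by positivity)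
            _ ≤ C2 ^ 2 * (2 / (m:ℝ)) := by gcongr
            _ = 2 * C2 ^ 2 / (m:ℝ) := by ring
        have h35 : a0 * (m:ℝ) ≤ t ^ 2 / (2 * Sq) := by
          rw [ha0_def, div_mul_eq_mul_div, div_le_div_iff₀ (by positivity) (by positivity)]
          have h36 : Sq * (m:ℝ) ≤ 2 * C2 ^ 2 := by
            rw [le_div_iff₀ hmr0] at hSqle
            linarith only [hSqle]
          have h36' : (0:ℝ) ≤ t ^ 2 * (2 * C2 ^ 2 - Sq * (m:ℝ)) :=
            mul_nonneg (sq_nonneg t) (by linarith only [h36])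
          nlinarith only [h36']
        have h37 : -t ^ 2 / (2 * Sq) = -(t ^ 2 / (2 * Sq)) := by ring
        rw [h37]
        linarith only [h35]
    _ = ((Finset.Icc m n).card : ENNReal) * ENNReal.ofReal (Real.exp (-(a0 * (m:ℝ)))) := by
        rw [Finset.sum_const, nsmul_eq_mul]
    _ ≤ ENNReal.ofReal (Real.exp (-(a0 / (2 * (J:ℝ))) * (n:ℝ))) := by
        have hcard_le : ((Finset.Icc m n).card : ENNReal) ≤ ((n + 1 : ℕ) : ENNReal) := by
          rw [Nat.card_Icc]
          exact_mod_cast Nat.cast_le.mpr (Nat.sub_le _ _)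
        calc ((Finset.Icc m n).card : ENNReal) * ENNReal.ofReal (Real.exp (-(a0 * (m:ℝ))))
            ≤ ((n + 1 : ℕ) : ENNReal) * ENNReal.ofReal (Real.exp (-(a0 * (m:ℝ)))) :=
              mul_le_mul_left hcard_le _
          _ = ENNReal.ofReal (((n:ℝ) + 1) * Real.exp (-(a0 * (m:ℝ)))) := by
              rw [← ENNReal.ofReal_natCast (n + 1), ← ENNReal.ofReal_mul (by positivity)]
              congr 2
              push_cast
              ring
          _ ≤ ENNReal.ofReal (Real.exp (-(a0 / (2 * (J:ℝ))) * (n:ℝ))) := by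
              apply ENNReal.ofReal_le_ofReal
              have h40 : Real.exp (-(a0 * (m:ℝ))) ≤ Real.exp (-(a0 * ((n:ℝ) / (J:ℝ)))) := by
                apply Real.exp_le_exp.mpr
                have h42 : (0:ℝ) ≤ a0 * ((m:ℝ) - (n:ℝ) / (J:ℝ)) :=
                  mul_nonneg ha00.le (by linarith only [hmlow])
                linarith only [h42]
              have h41 : -(a0 * ((n:ℝ) / (J:ℝ))) =
                  -(a0 / (2 * (J:ℝ))) * (n:ℝ) + -(a0 / (2 * (J:ℝ))) * (n:ℝ) := by
                field_simp
                ring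
              calc ((n:ℝ) + 1) * Real.exp (-(a0 * (m:ℝ)))
                  ≤ ((n:ℝ) + 1) * Real.exp (-(a0 * ((n:ℝ) / (J:ℝ)))) :=
                    mul_le_mul_of_nonneg_left h40 (by positivity)
                _ = (((n:ℝ) + 1) * Real.exp (-(a0 / (2 * (J:ℝ))) * (n:ℝ))) *
                      Real.exp (-(a0 / (2 * (J:ℝ))) * (n:ℝ)) := by
                    rw [h41, Real.exp_add]
                    ring
                _ ≤ 1 * Real.exp (-(a0 / (2 * (J:ℝ))) * (n:ℝ)) :=
                    mul_le_mul_of_nonneg_right hn3 (Real.exp_pos _).le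
                _ = Real.exp (-(a0 / (2 * (J:ℝ))) * (n:ℝ)) := one_mul _
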